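/- Let (X, Y) be supplementary difference sets over Z_v with parameters (v; r, s; λ) such that v = 2n + 1 where n = r + s − λ. Then the 2v × 2v block matrix [[C_X, C_Y], [−C_Y^T, C_X^T]] is a {+1, −1} matrix whose determinant has absolute value 2^v (2v−1)(v−1)^{v−1}, i.e., it is a D-optimal design of order 2v of two-circulant type. -/

import Mathlib

open Finset Matrix

/-- The number of ordered pairs `(a, b)` with `a, b ∈ X` and `a − b = c` in `ZMod v`. -/
def diffCount (v : ℕ) (X : Finset (ZMod v)) (c : ZMod v) : ℕ :=
  ((X ×ˢ X).filter (fun p => p.1 - p.2 = c)).card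

/-- The circulant ±1 matrix associated to `X ⊆ ZMod v`: its `(j,k)` entry is
`−1` if `k − j ∈ X` and `+1` otherwise. -/
def circ (v : ℕ) (X : Finset (ZMod v)) : Matrix (ZMod v) (ZMod v) ℤ :=
  fun j k => if k - j ∈ X then -1 else 1


section aux
variable {v : ℕ} [NeZero v]

variable {v : ℕ} [NeZero v]

lemma sum_ind (X : Finset (ZMod v)) (j : ZMod v) :
    ∑ i : ZMod v, (if i - j ∈ X then (1:ℤ) else 0) = X.card := by
  have h := (Equiv.subRight j).sum_comp (fun c => if c ∈ X then (1:ℤ) else 0)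
  simp only [Equiv.subRight_apply] at h
  rw [h]
  simp [Finset.sum_ite_mem]

lemma diffCount_zero (X : Finset (ZMod v)) : diffCount v X 0 = X.card := by
  rw [diffCount, show ((X ×ˢ X).filter fun p => p.1 - p.2 = 0) = X.diag from ?_, Finset.diag_card]
  ext ⟨a, b⟩
  simp only [Finset.mem_filter, Finset.mem_product, Finset.mem_diag, sub_eq_zero]
  constructor
  · rintro ⟨⟨h1, _⟩, h3⟩; exact ⟨h1, h3⟩
  · rintro ⟨h1, rfl⟩; exact ⟨⟨h1, h1⟩, rfl⟩

lemma sum_ind_mul (X : Finset (ZMod v)) (j k : ZMod v) :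
    ∑ i : ZMod v, (if i - j ∈ X then (1:ℤ) else 0) * (if i - k ∈ X then (1:ℤ) else 0)
      = diffCount v X (k - j) := by
  have h : ∀ i : ZMod v, (if i - j ∈ X then (1:ℤ) else 0) * (if i - k ∈ X then (1:ℤ) else 0)
      = if (i - j ∈ X ∧ i - k ∈ X) then 1 else 0 := by
    intro i; by_cases h1 : i - j ∈ X <;> by_cases h2 : i - k ∈ X <;> simp [h1, h2]
  rw [Finset.sum_congr rfl fun i _ => h i, Finset.sum_boole]
  norm_cast
  rw [diffCount]
  apply Finset.card_nbij' (fun i => (i - j, i - k)) (fun p => p.1 + j)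
  · intro a ha
    simp only [Finset.mem_coe, Finset.mem_filter, Finset.mem_univ, true_and] at ha
    simp only [Finset.mem_coe, Finset.mem_filter, Finset.mem_product]
    exact ⟨⟨ha.1, ha.2⟩, by ring⟩
  · intro p hp
    simp only [Finset.mem_coe, Finset.mem_filter, Finset.mem_product] at hp
    simp only [Finset.mem_coe, Finset.mem_filter, Finset.mem_univ, true_and]
    have h2 : p.1 + j - k = p.2 := by linear_combination hp.2
    constructor
    · simpa using hp.1.1
    · rw [h2]; exact hp.1.2
  · intro a _; ring
  · intro p hp
    simp only [Finset.mem_coe, Finset.mem_filter, Finset.mem_product] at hp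
    have h2 : p.1 + j - k = p.2 := by linear_combination hp.2
    obtain ⟨p1, p2⟩ := p
    simp only [Prod.mk.injEq]
    exact ⟨by ring, h2⟩

lemma key (X : Finset (ZMod v)) (j k : ZMod v) :
    ∑ i : ZMod v, (if i - j ∈ X then (-1:ℤ) else 1) * (if i - k ∈ X then (-1:ℤ) else 1)
      = v - 4 * X.card + 4 * diffCount v X (k - j) := by
  have h : ∀ i : ZMod v, (if i - j ∈ X then (-1:ℤ) else 1) * (if i - k ∈ X then (-1:ℤ) else 1)
      = 1 - 2 * (if i - j ∈ X then (1:ℤ) else 0) - 2 * (if i - k ∈ X then (1:ℤ) else 0)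
        + 4 * ((if i - j ∈ X then (1:ℤ) else 0) * (if i - k ∈ X then (1:ℤ) else 0)) := by
    intro i; by_cases h1 : i - j ∈ X <;> by_cases h2 : i - k ∈ X <;> simp [h1, h2] <;> ring
  rw [Finset.sum_congr rfl fun i _ => h i, Finset.sum_add_distrib, Finset.sum_sub_distrib,
    Finset.sum_sub_distrib, ← Finset.mul_sum, ← Finset.mul_sum, ← Finset.mul_sum,
    sum_ind, sum_ind, sum_ind_mul, Finset.sum_const, Finset.card_univ, ZMod.card]
  simp only [nsmul_eq_mul, mul_one]
  push_cast
  ring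

lemma key2 (X : Finset (ZMod v)) (j k : ZMod v) :
    ∑ i : ZMod v, (if j - i ∈ X then (-1:ℤ) else 1) * (if k - i ∈ X then (-1:ℤ) else 1)
      = v - 4 * X.card + 4 * diffCount v X (j - k) := by
  have h := key X (-j) (-k)
  rw [show (-k - -j : ZMod v) = j - k from by ring] at h
  rw [← h]
  apply Finset.sum_equiv (Equiv.neg (ZMod v)) (by simp)
  intro i _
  rw [Equiv.neg_apply, show (-i - -j : ZMod v) = j - i from by ring,
    show (-i - -k : ZMod v) = k - i from by ring]

lemma comm_sum (X Y : Finset (ZMod v)) (j k : ZMod v) :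
    ∑ i : ZMod v, (if i - j ∈ X then (-1:ℤ) else 1) * (if k - i ∈ Y then (-1:ℤ) else 1)
      = ∑ i : ZMod v, (if i - j ∈ Y then (-1:ℤ) else 1) * (if k - i ∈ X then (-1:ℤ) else 1) := by
  apply Finset.sum_equiv (Equiv.subLeft (j + k)) (by simp)
  intro i _
  rw [Equiv.subLeft_apply, show (j + k - i - j : ZMod v) = k - i from by ring,
    show (k - (j + k - i) : ZMod v) = i - j from by ring, mul_comm]

lemma comm_sum2 (X Y : Finset (ZMod v)) (j k : ZMod v) :
    ∑ i : ZMod v, (if j - i ∈ X then (-1:ℤ) else 1) * (if i - k ∈ Y then (-1:ℤ) else 1)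
      = ∑ i : ZMod v, (if j - i ∈ Y then (-1:ℤ) else 1) * (if i - k ∈ X then (-1:ℤ) else 1) := by
  apply Finset.sum_equiv (Equiv.subLeft (j + k)) (by simp)
  intro i _
  rw [Equiv.subLeft_apply, show (j - (j + k - i) : ZMod v) = i - k from by ring,
    show (j + k - i - k : ZMod v) = j - i from by ring, mul_comm]

end aux


lemma detD (v : ℕ) [NeZero v] :
    (Matrix.of (fun j k : ZMod v => if j = k then (2*(v:ℤ)) else 2)).det
      = ((2 ^ v * (2 * v - 1) * (v - 1) ^ (v - 1) : ℕ) : ℤ) := by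
  by_cases hv1 : v = 1
  · subst hv1
    haveI : Unique (ZMod 1) := inferInstanceAs (Unique (Fin 1))
    rw [Matrix.det_unique]
    norm_num
  · obtain ⟨w, rfl⟩ : ∃ w, v = w + 2 := ⟨v - 2, by have := NeZero.ne v; omega⟩
    have hne : (2*(w:ℚ)+2) ≠ 0 := by positivity
    have hne1 : ((w:ℚ)+1) ≠ 0 := by positivity
    set M : Matrix (ZMod (w+2)) (ZMod (w+2)) ℤ :=
      Matrix.of (fun j k : ZMod (w+2) => if j = k then (2*((w+2:ℕ):ℤ)) else 2) with hM
    have hmap : M.map (Int.cast : ℤ → ℚ)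
        = (2*(w:ℚ)+2) • ((1 : Matrix (ZMod (w+2)) (ZMod (w+2)) ℚ)
            + Matrix.replicateCol Unit (fun _ : ZMod (w+2) => 2/(2*(w:ℚ)+2))
              * Matrix.replicateRow Unit (fun _ : ZMod (w+2) => (1:ℚ))) := by
      ext j k
      by_cases h : j = k <;>
        simp only [hM, Matrix.map_apply, Matrix.of_apply, Matrix.smul_apply, Matrix.add_apply,
          Matrix.mul_apply, Matrix.one_apply, Matrix.replicateCol_apply, Matrix.replicateRow_apply, h, if_pos,
          if_neg, ite_true, ite_false, Finset.univ_unique, Finset.sum_singleton, smul_eq_mul,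
          if_true, not_false_iff] <;>
        push_cast <;> field_simp <;> ring_nf
    have hcast : ((M.det : ℤ) : ℚ) = (M.map (Int.cast : ℤ → ℚ)).det := by
      have h := RingHom.map_det (Int.castRingHom ℚ) M
      simpa using h
    have hgoal : ((M.det : ℤ) : ℚ)
        = ((2 ^ (w+2) * (2 * (w+2) - 1) * ((w+2) - 1) ^ ((w+2) - 1) : ℕ) : ℚ) := by
      rw [hcast, hmap, Matrix.det_smul, Matrix.det_one_add_replicateCol_mul_replicateRow]
      simp only [dotProduct, Finset.card_univ, ZMod.card, Finset.sum_const, nsmul_eq_mul, one_mul]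
      rw [show 2*(w+2)-1 = 2*w+3 from by omega, show w+2-1 = w+1 from by omega,
        show (2*(w:ℚ)+2) = 2*((w:ℚ)+1) from by ring, mul_pow]
      push_cast
      field_simp
      ring
    exact_mod_cast hgoal

theorem doptimal_design_of_sds (v : ℕ) [NeZero v] (r s lam : ℕ)
    (X Y : Finset (ZMod v))
    (hX : X.card = r) (hY : Y.card = s)
    (hsds : ∀ c : ZMod v, c ≠ 0 → diffCount v X c + diffCount v Y c = lam)
    (hv : v + 2 * lam = 2 * (r + s) + 1)
    (A : Matrix (ZMod v ⊕ ZMod v) (ZMod v ⊕ ZMod v) ℤ)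
    (hA : A = Matrix.fromBlocks (circ v X) (circ v Y) (-(circ v Y)ᵀ) (circ v X)ᵀ) :
    (∀ i j, A i j = 1 ∨ A i j = -1) ∧
      A.det.natAbs = 2 ^ v * (2 * v - 1) * (v - 1) ^ (v - 1) := by
  subst hA
  constructor
  · rintro (i|i) (j|j) <;>
      simp only [Matrix.fromBlocks_apply₁₁, Matrix.fromBlocks_apply₁₂, Matrix.fromBlocks_apply₂₁,
        Matrix.fromBlocks_apply₂₂, circ, Matrix.transpose_apply, Matrix.neg_apply] <;>
      split <;> norm_num
  · set D : Matrix (ZMod v) (ZMod v) ℤ :=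
      Matrix.of (fun j k => if j = k then (2*(v:ℤ)) else 2) with hD
    set A := Matrix.fromBlocks (circ v X) (circ v Y) (-(circ v Y)ᵀ) (circ v X)ᵀ with hA
    have hAAT : A * Aᵀ = Matrix.fromBlocks D 0 0 D := by
      ext i j
      rcases i with j1|j1 <;> rcases j with k1|k1 <;>
        simp only [hA, hD, Matrix.mul_apply, Matrix.transpose_apply, Fintype.sum_sum_type,
          Matrix.fromBlocks_apply₁₁, Matrix.fromBlocks_apply₁₂, Matrix.fromBlocks_apply₂₁,
          Matrix.fromBlocks_apply₂₂, Matrix.neg_apply, circ, Matrix.of_apply,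
          Matrix.zero_apply, mul_neg, neg_mul, neg_neg, Finset.sum_neg_distrib]
      · rw [key X, key Y]
        by_cases h : j1 = k1
        · subst h
          rw [if_pos rfl, sub_self, diffCount_zero, diffCount_zero, hX, hY]
          push_cast
          ring
        · rw [if_neg h]
          have hc := hsds (k1 - j1) (sub_ne_zero.mpr (Ne.symm h))
          omega
      · rw [comm_sum X Y j1 k1]
        ring
      · rw [comm_sum2 Y X j1 k1]
        ring
      · rw [key2 Y, key2 X]
        by_cases h : j1 = k1
        · subst h
          rw [if_pos rfl, sub_self, diffCount_zero, diffCount_zero, hX, hY]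
          push_cast
          ring
        · rw [if_neg h]
          have hc := hsds (j1 - k1) (sub_ne_zero.mpr h)
          omega
    have hdet : A.det * A.det = D.det * D.det := by
      have h := congrArg Matrix.det hAAT
      rwa [Matrix.det_mul, Matrix.det_transpose, Matrix.det_fromBlocks_zero₂₁] at h
    rw [detD v] at hdet
    have hsq : A.det.natAbs ^ 2 = (2 ^ v * (2 * v - 1) * (v - 1) ^ (v - 1)) ^ 2 := by
      have h1 := congrArg Int.natAbs hdet
      simpa [Int.natAbs_mul, Int.natAbs_pow, pow_two] using h1
    exact Nat.pow_left_injective (by norm_num) hsq
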